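/- Let A be a nonempty subset of a normed vector space X and K a closed convex cone. The following are equivalent: (i) there exists ℓ ≥ 0 such that A ⊂ ℓ·D_X + K, where D_X is the closed unit ball; (ii) there exists ρ ∈ ℝ such that inf x*(A) ≥ ρ for every x* ∈ K⁺ with ‖x*‖ ≤ 1. Moreover, either of these implies: (iii) for every x* ∈ K⁺, the set x*(A) is bounded from below. -/

import Mathlib

open Pointwise

/-- (i) K-boundedness ↔ (ii) uniform lower bound over unit-ball positive functionals,
and either implies (iii) dual K-boundedness. -/
theorem cone_bounded_tfae
    {X : Type*} [NormedAddCommGroup X] [NormedSpace ℝ X]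
    (K : Set X) (hKcl : IsClosed K) (hKconv : Convex ℝ K)
    (hK0 : (0 : X) ∈ K)
    (hKcone : ∀ t : ℝ, 0 ≤ t → ∀ y ∈ K, t • y ∈ K)
    (A : Set X) (hA : A.Nonempty) :
    ((∃ ℓ : ℝ, 0 ≤ ℓ ∧ A ⊆ Metric.closedBall (0 : X) ℓ + K) ↔
      (∃ ρ : ℝ, ∀ f : X →L[ℝ] ℝ, (∀ k ∈ K, 0 ≤ f k) → ‖f‖ ≤ 1 → ∀ a ∈ A, ρ ≤ f a)) ∧
    ((∃ ℓ : ℝ, 0 ≤ ℓ ∧ A ⊆ Metric.closedBall (0 : X) ℓ + K) →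
      (∀ f : X →L[ℝ] ℝ, (∀ k ∈ K, 0 ≤ f k) → BddBelow (f '' A))) := by
  constructor
  · constructor
    · -- (i) → (ii)
      rintro ⟨ℓ, hℓ0, hsub⟩
      refine ⟨-ℓ, fun f hfK hf1 a ha => ?_⟩
      obtain ⟨x, hx, k, hk, rfl⟩ := hsub ha
      have hxn : ‖x‖ ≤ ℓ := by simpa using hx
      have h1 : -ℓ ≤ f x := by
        have h2 : |f x| ≤ ℓ := by
          calc |f x| = ‖f x‖ := rfl
            _ ≤ ‖f‖ * ‖x‖ := f.le_opNorm x
            _ ≤ 1 * ℓ := by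
                apply mul_le_mul hf1 hxn (norm_nonneg x) zero_le_one
            _ = ℓ := one_mul ℓ
        linarith [(abs_le.mp h2).1]
      have := hfK k hk
      simpa [map_add] using add_le_add h1 this
    · -- (ii) → (i)
      rintro ⟨ρ, hρ⟩
      set ℓ : ℝ := max 1 (1 - ρ) with hℓdef
      have hℓ1 : (1:ℝ) ≤ ℓ := le_max_left _ _
      have hℓ0 : (0:ℝ) ≤ ℓ := by linarith
      refine ⟨ℓ, hℓ0, fun a ha => ?_⟩
      by_contra hnot
      -- separate a from the open convex set ball 0 ℓ + K
      have hsconv : Convex ℝ (Metric.ball (0:X) ℓ + K) :=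
        (convex_ball 0 ℓ).add hKconv
      have hsopen : IsOpen (Metric.ball (0:X) ℓ + K) :=
        Metric.isOpen_ball.add_right
      have hna : a ∉ Metric.ball (0:X) ℓ + K := by
        intro h
        exact hnot (Set.add_subset_add_right Metric.ball_subset_closedBall h)
      obtain ⟨f, hf⟩ := geometric_hahn_banach_open_point hsconv hsopen hna
      have hfa0 : 0 < f a := by
        have := hf 0 ⟨0, by simpa using (by linarith : (0:ℝ) < ℓ), 0, hK0, by simp⟩
        simpa using this
      -- f k ≤ 0 for k ∈ K
      have hfK : ∀ k ∈ K, f k ≤ 0 := by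
        intro k hk
        by_contra hpos
        push_neg at hpos
        have ht : ∀ t : ℝ, 0 ≤ t → t * f k < f a := by
          intro t ht0
          have : (t • k) ∈ Metric.ball (0:X) ℓ + K :=
            ⟨0, by simpa using (by linarith : (0:ℝ) < ℓ), t • k, hKcone t ht0 k hk, by simp⟩
          simpa using hf _ this
        have h1 := ht ((f a + 1) / f k) (by positivity)
        rw [div_mul_cancel₀ _ (ne_of_gt hpos)] at h1
        linarith
      -- f ≠ 0 and ℓ‖f‖ ≤ f a
      have hbound : ∀ r : ℝ, 0 < r → r < ℓ → ‖f‖ ≤ f a / r := by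
        intro r hr hrℓ
        refine ContinuousLinearMap.opNorm_le_bound f (by positivity) (fun x => ?_)
        rcases eq_or_ne x 0 with rfl | hx0
        · simp
        have hxn : (0:ℝ) < ‖x‖ := norm_pos_iff.mpr hx0
        have hmem : ∀ s : X, ‖s‖ < ℓ → f s < f a := fun s hs =>
          hf s ⟨s, by simpa using hs, 0, hK0, by simp⟩
        have hnorm1 : ‖(r / ‖x‖) • x‖ = r := by
          rw [norm_smul, Real.norm_eq_abs, abs_of_pos (div_pos hr hxn),
            div_mul_cancel₀ _ (ne_of_gt hxn)]
        have h1 : f ((r / ‖x‖) • x) < f a := hmem _ (by rw [hnorm1]; exact hrℓ)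
        have h2 : f ((-(r / ‖x‖)) • x) < f a := hmem _ (by
          rw [neg_smul, norm_neg, hnorm1]; exact hrℓ)
        rw [map_smul, smul_eq_mul] at h1
        rw [map_smul, smul_eq_mul, neg_mul] at h2
        have habs : |f x| < f a * ‖x‖ / r := by
          rw [abs_lt]
          constructor
          · have := h2
            rw [neg_lt]
            calc -f x = (r / ‖x‖ * f x * (-1)) * (‖x‖ / r) := by
                  field_simp
              _ < f a * (‖x‖ / r) := by
                  apply mul_lt_mul_of_pos_right _ (by positivity)
                  linarith
              _ = f a * ‖x‖ / r := by ring
          · calc f x = (r / ‖x‖ * f x) * (‖x‖ / r) := by field_simp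
              _ < f a * (‖x‖ / r) := mul_lt_mul_of_pos_right h1 (by positivity)
              _ = f a * ‖x‖ / r := by ring
        calc ‖f x‖ = |f x| := rfl
          _ ≤ f a * ‖x‖ / r := le_of_lt habs
          _ = f a / r * ‖x‖ := by ring
      have hfne : ‖f‖ ≠ 0 := by
        intro h0
        have : f = 0 := by
          ext x; simpa using ContinuousLinearMap.opNorm_zero_iff f |>.mp h0 ▸ rfl
        rw [this] at hfa0; simp at hfa0
      have hfpos : 0 < ‖f‖ := lt_of_le_of_ne (norm_nonneg f) (Ne.symm hfne)
      have hℓf : ℓ * ‖f‖ ≤ f a := by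
        by_contra hlt
        push_neg at hlt
        -- choose r close to ℓ
        have : ∃ r : ℝ, 0 < r ∧ r < ℓ ∧ f a < r * ‖f‖ := by
          refine ⟨max (ℓ/2) (f a / ‖f‖ + (ℓ - f a / ‖f‖)/2), ?_, ?_, ?_⟩
          · exact lt_of_lt_of_le (by linarith) (le_max_left _ _)
          · have h1 : f a / ‖f‖ < ℓ := (div_lt_iff₀ hfpos).mpr hlt
            apply max_lt (by linarith)
            linarith
          · have h1 : f a / ‖f‖ < ℓ := (div_lt_iff₀ hfpos).mpr hlt
            have h2 : f a / ‖f‖ < f a / ‖f‖ + (ℓ - f a / ‖f‖)/2 := by linarith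
            have h3 : f a / ‖f‖ < max (ℓ/2) (f a / ‖f‖ + (ℓ - f a / ‖f‖)/2) :=
              lt_of_lt_of_le h2 (le_max_right _ _)
            calc f a = f a / ‖f‖ * ‖f‖ := by field_simp
              _ < _ := mul_lt_mul_of_pos_right h3 hfpos
        obtain ⟨r, hr0, hrℓ, hr⟩ := this
        have := hbound r hr0 hrℓ
        have : r * ‖f‖ ≤ f a := by
          rw [mul_comm]
          exact (le_div_iff₀ hr0).mp this
        linarith
      -- now use hypothesis with g = ‖f‖⁻¹ • (-f)
      set g : X →L[ℝ] ℝ := ‖f‖⁻¹ • (-f) with hg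
      have hgK : ∀ k ∈ K, 0 ≤ g k := by
        intro k hk
        have := hfK k hk
        simp only [hg, ContinuousLinearMap.smul_apply, ContinuousLinearMap.neg_apply,
          smul_eq_mul]
        exact mul_nonneg (inv_nonneg.mpr (norm_nonneg f)) (neg_nonneg.mpr this)
      have hgnorm : ‖g‖ ≤ 1 := by
        refine ContinuousLinearMap.opNorm_le_bound g zero_le_one (fun x => ?_)
        have : ‖g x‖ = ‖f‖⁻¹ * ‖f x‖ := by
          simp only [hg, ContinuousLinearMap.smul_apply, ContinuousLinearMap.neg_apply,
            smul_eq_mul, Real.norm_eq_abs, abs_mul, abs_neg, abs_of_pos (inv_pos.mpr hfpos)]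
        rw [this, one_mul]
        calc ‖f‖⁻¹ * ‖f x‖ ≤ ‖f‖⁻¹ * (‖f‖ * ‖x‖) := by
              apply mul_le_mul_of_nonneg_left (f.le_opNorm x)
                (inv_nonneg.mpr (norm_nonneg f))
          _ = ‖x‖ := by field_simp
      have hga := hρ g hgK hgnorm a ha
      have : g a ≤ -ℓ := by
        simp only [hg, ContinuousLinearMap.smul_apply, ContinuousLinearMap.neg_apply,
          smul_eq_mul]
        rw [mul_neg, neg_le_neg_iff]
        rw [le_inv_mul_iff₀ hfpos, mul_comm]
        exact hℓf
      have : ρ ≤ -ℓ := le_trans hga this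
      have : 1 - ρ ≤ ℓ := le_max_right _ _
      linarith
  · -- (i) → (iii)
    rintro ⟨ℓ, hℓ0, hsub⟩ f hfK
    refine ⟨-(ℓ * ‖f‖), ?_⟩
    rintro y ⟨a, ha, rfl⟩
    obtain ⟨x, hx, k, hk, rfl⟩ := hsub ha
    have hxn : ‖x‖ ≤ ℓ := by simpa using hx
    have h1 : -(ℓ * ‖f‖) ≤ f x := by
      have := f.le_opNorm x
      have h2 : |f x| ≤ ‖f‖ * ℓ := le_trans this (by nlinarith [f.opNorm_nonneg])
      have := (abs_le.mp h2).1
      linarith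
    have := hfK k hk
    simp only [map_add]
    linarith
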